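/- Let r ≥ 1, let ε₁,δ₁,…,ε_r,δ_r ∈ {1,−1}, and write (p,q)ᵀ = M_{ε₁,δ₁}·…·M_{ε_r,δ_r}·(1,0)ᵀ. Then p > q > 1, gcd(p,q) = 1, and q is even. -/

import Mathlib

/-- The sign function with the convention `sgn 0 = 1`. -/
def sgn (k : ℤ) : ℤ := if k < 0 then -1 else 1

/-- The matrix `M_{k,l} = [[sgn(k)+4|kl|, 2|k|·sgn(l)], [2|l|, sgn(l)]]`. -/
def M (k l : ℤ) : Matrix (Fin 2) (Fin 2) ℤ :=
  !![sgn k + 4 * |k * l|, 2 * |k| * sgn l; 2 * |l|, sgn l]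

lemma mulVec2 (a b c d : ℤ) (w : Fin 2 → ℤ) :
    (!![a, b; c, d]).mulVec w = ![a * w 0 + b * w 1, c * w 0 + d * w 1] := by
  funext i
  fin_cases i <;> simp [Matrix.mulVec, dotProduct, Fin.sum_univ_two]

lemma gcd_step (a b p q : ℤ) (h : Int.gcd a b = 1) (x y z w : ℤ)
    (ha : a = x * p + y * q) (hb : b = z * p + w * q) : Int.gcd p q = 1 := by
  have hp : (Int.gcd p q : ℤ) ∣ p := Int.gcd_dvd_left p q
  have hq : (Int.gcd p q : ℤ) ∣ q := Int.gcd_dvd_right p q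
  have hda : (Int.gcd p q : ℤ) ∣ a := ha ▸ dvd_add (hp.mul_left x) (hq.mul_left y)
  have hdb : (Int.gcd p q : ℤ) ∣ b := hb ▸ dvd_add (hp.mul_left z) (hq.mul_left w)
  have : (Int.gcd p q : ℤ) ∣ (Int.gcd a b : ℤ) := Int.dvd_coe_gcd hda hdb
  rw [h] at this
  exact Nat.dvd_one.mp (Int.ofNat_dvd.mp (by exact_mod_cast this))

lemma key (L : List (Matrix (Fin 2) (Fin 2) ℤ))
    (hL : ∀ A ∈ L, ∃ k l : ℤ, (k = 1 ∨ k = -1) ∧ (l = 1 ∨ l = -1) ∧ A = M k l) :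
    (L.prod.mulVec ![1, 0] 1 < L.prod.mulVec ![1, 0] 0) ∧
    0 ≤ L.prod.mulVec ![1, 0] 1 ∧
    L.prod.mulVec ![1, 0] 0 % 2 = 1 ∧
    L.prod.mulVec ![1, 0] 1 % 2 = 0 ∧
    Int.gcd (L.prod.mulVec ![1, 0] 0) (L.prod.mulVec ![1, 0] 1) = 1 ∧
    (L ≠ [] → 2 ≤ L.prod.mulVec ![1, 0] 1) := by
  induction L with
  | nil => simp [Matrix.one_mulVec]
  | cons A L ih =>
    obtain ⟨k, l, hk, hl, hA⟩ := hL A List.mem_cons_self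
    have ihL := ih (fun B hB => hL B (List.mem_cons_of_mem A hB))
    set w := L.prod.mulVec ![1, 0] with hw
    obtain ⟨h1, h2, h3, h4, h5, _⟩ := ihL
    subst hA
    have hprod : (M k l :: L).prod.mulVec ![1, 0] = (M k l).mulVec w := by
      rw [List.prod_cons, ← Matrix.mulVec_mulVec]
    have ha1 : 1 ≤ w 0 := by omega
    have step : ∀ (c1 c2 c3 c4 : ℤ), (M k l) = !![c1, c2; c3, c4] →
        c3 * w 0 + c4 * w 1 < c1 * w 0 + c2 * w 1 →
        0 ≤ c3 * w 0 + c4 * w 1 →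
        (c1 * w 0 + c2 * w 1) % 2 = 1 →
        (c3 * w 0 + c4 * w 1) % 2 = 0 →
        Int.gcd (c1 * w 0 + c2 * w 1) (c3 * w 0 + c4 * w 1) = 1 →
        2 ≤ c3 * w 0 + c4 * w 1 →
        ((M k l :: L).prod.mulVec ![1, 0] 1 < (M k l :: L).prod.mulVec ![1, 0] 0) ∧
        0 ≤ (M k l :: L).prod.mulVec ![1, 0] 1 ∧
        (M k l :: L).prod.mulVec ![1, 0] 0 % 2 = 1 ∧
        (M k l :: L).prod.mulVec ![1, 0] 1 % 2 = 0 ∧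
        Int.gcd ((M k l :: L).prod.mulVec ![1, 0] 0) ((M k l :: L).prod.mulVec ![1, 0] 1) = 1 ∧
        (M k l :: L ≠ [] → 2 ≤ (M k l :: L).prod.mulVec ![1, 0] 1) := by
      intro c1 c2 c3 c4 hM g1 g2 g3 g4 g5 g6
      rw [hprod, hM, mulVec2]
      simp only [Matrix.cons_val_zero, Matrix.cons_val_one, Matrix.head_cons]
      exact ⟨g1, g2, g3, g4, g5, fun _ => g6⟩
    rcases hk with hk | hk <;> rcases hl with hl | hl <;> subst hk hl
    · refine step 5 2 2 1 (by ext i j; fin_cases i <;> fin_cases j <;> norm_num [M, sgn])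
        (by omega) (by omega) (by omega) (by omega) ?_ (by omega)
      exact gcd_step _ _ _ _ h5 1 (-2) (-2) 5 (by ring) (by ring)
    · refine step 5 (-2) 2 (-1) (by ext i j; fin_cases i <;> fin_cases j <;> norm_num [M, sgn])
        (by omega) (by omega) (by omega) (by omega) ?_ (by omega)
      exact gcd_step _ _ _ _ h5 1 (-2) 2 (-5) (by ring) (by ring)
    · refine step 3 2 2 1 (by ext i j; fin_cases i <;> fin_cases j <;> norm_num [M, sgn])
        (by omega) (by omega) (by omega) (by omega) ?_ (by omega)
      exact gcd_step _ _ _ _ h5 (-1) 2 2 (-3) (by ring) (by ring)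
    · refine step 3 (-2) 2 (-1) (by ext i j; fin_cases i <;> fin_cases j <;> norm_num [M, sgn])
        (by omega) (by omega) (by omega) (by omega) ?_ (by omega)
      exact gcd_step _ _ _ _ h5 (-1) 2 (-2) 3 (by ring) (by ring)

theorem stmt_4 (r : ℕ) (hr : 1 ≤ r) (ε δ : Fin r → ℤ)
    (hε : ∀ i, ε i = 1 ∨ ε i = -1) (hδ : ∀ i, δ i = 1 ∨ δ i = -1)
    (p q : ℤ)
    (hpq : (List.ofFn fun i => M (ε i) (δ i)).prod.mulVec ![1, 0] = ![p, q]) :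
    p > q ∧ q > 1 ∧ Int.gcd p q = 1 ∧ 2 ∣ q := by
  set L := List.ofFn fun i => M (ε i) (δ i) with hLdef
  have hL : ∀ A ∈ L, ∃ k l : ℤ, (k = 1 ∨ k = -1) ∧ (l = 1 ∨ l = -1) ∧ A = M k l := by
    intro A hA
    rw [hLdef, List.mem_ofFn] at hA
    obtain ⟨i, hi⟩ := hA
    exact ⟨ε i, δ i, hε i, hδ i, hi.symm⟩
  have hne : L ≠ [] := by
    intro h
    have := congrArg List.length h
    simp [hLdef] at this
    omega
  obtain ⟨h1, h2, h3, h4, h5, h6⟩ := key L hL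
  rw [hpq] at h1 h2 h3 h4 h5 h6
  simp only [Matrix.cons_val_zero, Matrix.cons_val_one, Matrix.head_cons] at h1 h2 h3 h4 h5 h6
  exact ⟨h1, by have := h6 hne; omega, h5, by omega⟩
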